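/- arXiv:1410.0611 — 3 statements merged into one kernel-verified Lean document; each statement's English description precedes it below -/
import Mathlib

section
/- Let ν(s) = s^{-1}e^{-s} (the Lévy intensity of a gamma process) and ν*(z) = z^{-1}(1-z)^{φ-1} on (0,1), with φ > 0. Then for all s > 0, ∫₀¹ z^{-1} · (1/Γ(φ)) (s/z)^{φ-1} e^{-s/z} · z^{-1}(1-z)^{φ-1} dz = s^{-1} e^{-s}. That is, mixing Gamma(φ, z) densities against the beta-process intensity ν* recovers the gamma process intensity. -/
open MeasureTheory

theorem stmt_4 (φ : ℝ) (hφ : 0 < φ) (s : ℝ) (hs : 0 < s) :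
    (∫ z in Set.Ioo (0:ℝ) 1,
      z⁻¹ * ((1 / Real.Gamma φ) * (s / z) ^ (φ - 1) * Real.exp (-(s / z))) *
        (z⁻¹ * (1 - z) ^ (φ - 1)))
      = s⁻¹ * Real.exp (-s) := by
  set g : ℝ → ℝ := fun z => z⁻¹ * ((1 / Real.Gamma φ) * (s / z) ^ (φ - 1) * Real.exp (-(s / z))) *
        (z⁻¹ * (1 - z) ^ (φ - 1)) with hg
  have himg : (fun x : ℝ => (x + 1)⁻¹) '' Set.Ioi 0 = Set.Ioo (0:ℝ) 1 := by
    ext z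
    constructor
    · rintro ⟨x, hx, rfl⟩
      have hx' : (0:ℝ) < x := hx
      constructor
      · positivity
      · rw [inv_lt_one_iff₀]; right; linarith
    · rintro ⟨hz0, hz1⟩
      refine ⟨z⁻¹ - 1, ?_, ?_⟩
      · simp only [Set.mem_Ioi, sub_pos]
        exact (one_lt_inv_iff₀).2 ⟨hz0, hz1⟩
      · simp
  have hderiv : ∀ x ∈ Set.Ioi (0:ℝ), HasDerivWithinAt (fun x : ℝ => (x + 1)⁻¹)
      (-(((x + 1) ^ 2)⁻¹)) (Set.Ioi 0) x := by
    intro x hx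
    have hx' : (0:ℝ) < x := hx
    have h1 : x + 1 ≠ 0 := by positivity
    have := ((hasDerivAt_id x).add_const 1).inv h1
    simp only [id_eq] at this
    have h2 : -1 / (x + 1) ^ 2 = -(((x + 1) ^ 2)⁻¹) := by ring
    exact (h2 ▸ this).hasDerivWithinAt
  have hinj : Set.InjOn (fun x : ℝ => (x + 1)⁻¹) (Set.Ioi 0) := by
    intro a ha b hb h
    have ha' : (0:ℝ) < a := ha
    have hb' : (0:ℝ) < b := hb
    have : a + 1 = b + 1 := by
      have := inv_injective h
      simpa using this
    linarith
  rw [← himg, integral_image_eq_integral_abs_deriv_smul measurableSet_Ioi hderiv hinj g]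
  have hcongr : ∀ x ∈ Set.Ioi (0:ℝ),
      |(-(((x + 1) ^ 2)⁻¹))| • g ((x + 1)⁻¹)
        = (1 / Real.Gamma φ * (s ^ (φ - 1) * Real.exp (-s))) *
          (x ^ (φ - 1) * Real.exp (-(s * x))) := by
    intro x hx
    have hx' : (0:ℝ) < x := hx
    have h1 : (0:ℝ) < x + 1 := by linarith
    have h1' : x + 1 ≠ 0 := h1.ne'
    have hz : ((x + 1)⁻¹ : ℝ)⁻¹ = x + 1 := inv_inv _
    have hsz : s / (x + 1)⁻¹ = s * (x + 1) := by field_simp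
    have h1z : 1 - (x + 1)⁻¹ = x / (x + 1) := by field_simp; ring
    rw [hg]
    simp only [smul_eq_mul, hz, hsz, h1z, abs_neg, abs_inv, abs_pow, abs_of_pos h1]
    have key : (s * (x + 1)) ^ (φ - 1) * (x / (x + 1)) ^ (φ - 1) = s ^ (φ - 1) * x ^ (φ - 1) := by
      rw [← Real.mul_rpow (by positivity) (by positivity), ← Real.mul_rpow hs.le hx'.le]
      congr 1
      field_simp
    have hexp : Real.exp (-(s * (x + 1))) = Real.exp (-s) * Real.exp (-(s * x)) := by
      rw [← Real.exp_add]; ring_nf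
    field_simp
    rw [mul_comm (x + 1) s, mul_comm x s]
    linear_combination Real.exp (-(s * (x + 1))) * key + s ^ (φ - 1) * x ^ (φ - 1) * hexp
  rw [setIntegral_congr_fun measurableSet_Ioi hcongr, integral_const_mul,
    Real.integral_rpow_mul_exp_neg_mul_Ioi hφ hs]
  have hG : Real.Gamma φ ≠ 0 := (Real.Gamma_pos_of_pos hφ).ne'
  have h1 : (1 / s) ^ φ = (s ^ φ)⁻¹ := by
    rw [one_div, Real.inv_rpow hs.le]
  have h2 : s ^ (φ - 1) * s = s ^ φ := by
    have := (Real.rpow_add hs (φ - 1) 1).symm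
    rw [Real.rpow_one] at this
    rw [this]
    norm_num
  rw [h1]
  field_simp
  linear_combination h2
end

section
/- Let 0 < σ < 1, φ > 0, a > 0, and ν*(z) = (σΓ(φ)/(Γ(φ+σ)Γ(1-σ))) z^{-σ-1}(1-az)^{σ+φ-1} for 0 < z < 1/a. Then for all s > 0, ∫₀^{1/a} z^{-1}·(1/Γ(φ))(s/z)^{φ-1}e^{-s/z} ν*(z) dz = (σ/Γ(1-σ)) s^{-1-σ} e^{-as}, the Lévy intensity of a generalized gamma process. -/
open MeasureTheory

theorem stmt_6 (σ φ a : ℝ) (hσ : 0 < σ) (hσ1 : σ < 1) (hφ : 0 < φ) (ha : 0 < a)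
    (s : ℝ) (hs : 0 < s) :
    (∫ z in Set.Ioo (0:ℝ) (1 / a),
      z⁻¹ * ((1 / Real.Gamma φ) * (s / z) ^ (φ - 1) * Real.exp (-(s / z))) *
        ((σ * Real.Gamma φ / (Real.Gamma (φ + σ) * Real.Gamma (1 - σ))) *
          z ^ (-σ - 1) * (1 - a * z) ^ (σ + φ - 1)))
      = (σ / Real.Gamma (1 - σ)) * s ^ (-1 - σ) * Real.exp (-(a * s)) := by
  have hΓφ : 0 < Real.Gamma φ := Real.Gamma_pos_of_pos hφ
  have hΓφσ : 0 < Real.Gamma (φ + σ) := Real.Gamma_pos_of_pos (by linarith)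
  have hΓ1σ : 0 < Real.Gamma (1 - σ) := Real.Gamma_pos_of_pos (by linarith)
  set f : ℝ → ℝ := fun w => (w + a)⁻¹ with hf_def
  set g : ℝ → ℝ := fun z =>
      z⁻¹ * ((1 / Real.Gamma φ) * (s / z) ^ (φ - 1) * Real.exp (-(s / z))) *
        ((σ * Real.Gamma φ / (Real.Gamma (φ + σ) * Real.Gamma (1 - σ))) *
          z ^ (-σ - 1) * (1 - a * z) ^ (σ + φ - 1)) with hg_def
  have himg : f '' Set.Ioi (0:ℝ) = Set.Ioo (0:ℝ) (1 / a) := by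
    ext z
    constructor
    · rintro ⟨w, hw, rfl⟩
      have hw' : (0:ℝ) < w := hw
      have hwa : 0 < w + a := by linarith
      constructor
      · positivity
      · rw [one_div]
        exact inv_strictAnti₀ ha (by linarith)
    · rintro ⟨hz0, hz1⟩
      refine ⟨z⁻¹ - a, ?_, ?_⟩
      · have : a < z⁻¹ := by
          rw [one_div] at hz1
          exact (lt_inv_comm₀ ha hz0).mpr hz1
        simpa [Set.mem_Ioi] using sub_pos.mpr this
      · simp [hf_def, inv_inv, hz0.ne']
  have hderiv : ∀ w ∈ Set.Ioi (0:ℝ),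
      HasDerivWithinAt f (-(1:ℝ) / (w + a) ^ 2) (Set.Ioi 0) w := by
    intro w hw
    have hwa : w + a ≠ 0 := by have : (0:ℝ) < w := hw; positivity
    have : HasDerivAt f (-1 / (w + a) ^ 2) w := by
      have h := ((hasDerivAt_id w).add_const a).inv hwa
      simp at h
      exact h
    exact this.hasDerivWithinAt
  have hinj : Set.InjOn f (Set.Ioi (0:ℝ)) := by
    intro x hx y hy hxy
    have hx' : (0:ℝ) < x := hx
    have hy' : (0:ℝ) < y := hy
    have hxa : x + a ≠ 0 := by positivity
    have hya : y + a ≠ 0 := by positivity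
    have : x + a = y + a := by
      simp only [hf_def, inv_inj] at hxy
      linarith [hxy]
    linarith
  rw [← himg,
    integral_image_eq_integral_abs_deriv_smul measurableSet_Ioi hderiv hinj g]
  have hcongr : ∀ w ∈ Set.Ioi (0:ℝ),
      |(-(1:ℝ) / (w + a) ^ 2)| • g (f w)
        = (Real.exp (-(a * s)) * s ^ (φ - 1) * (σ / (Real.Gamma (φ + σ) * Real.Gamma (1 - σ))))
            * (w ^ (σ + φ - 1) * Real.exp (-(s * w))) := by
    intro w hw
    have hw' : (0:ℝ) < w := hw
    have hb : (0:ℝ) < w + a := by linarith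
    have hb' : (w + a) ≠ 0 := hb.ne'
    have h1 : f w = (w + a)⁻¹ := rfl
    have hz : (0:ℝ) < f w := by rw [h1]; positivity
    have habs : |(-(1:ℝ) / (w + a) ^ 2)| = ((w + a) ^ 2)⁻¹ := by
      rw [abs_div, abs_neg, abs_one, abs_of_pos (by positivity : (0:ℝ) < (w+a)^2), one_div]
    have hsz : s / f w = s * (w + a) := by
      rw [h1]; field_simp
    have h2 : (s / f w) ^ (φ - 1) = s ^ (φ - 1) * (w + a) ^ (φ - 1) := by
      rw [hsz, Real.mul_rpow hs.le hb.le]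
    have h3 : (f w) ^ (-σ - 1) = (w + a) ^ (σ + 1) := by
      rw [h1, Real.inv_rpow hb.le, ← Real.rpow_neg hb.le]
      ring_nf
    have h4 : 1 - a * f w = w / (w + a) := by
      rw [h1]
      field_simp
      ring
    have h5 : (1 - a * f w) ^ (σ + φ - 1)
        = w ^ (σ + φ - 1) / (w + a) ^ (σ + φ - 1) := by
      rw [h4, Real.div_rpow hw'.le hb.le]
    have h6 : Real.exp (-(s / f w)) = Real.exp (-(s * w)) * Real.exp (-(a * s)) := by
      rw [hsz, ← Real.exp_add]
      ring_nf
    have h7 : (f w)⁻¹ = (w + a) := by rw [h1, inv_inv]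
    have hbpow : (w + a) ^ (φ - 1) * (w + a) ^ (σ + 1)
        = (w + a) ^ (σ + φ - 1) * (w + a) := by
      have h9 : (w + a) ^ (σ + φ - 1) * (w + a) = (w + a) ^ (σ + φ - 1) * (w + a) ^ (1:ℝ) := by
        rw [Real.rpow_one]
      rw [h9, ← Real.rpow_add hb, ← Real.rpow_add hb]
      ring_nf
    have hΓne : Real.Gamma (φ + σ) * Real.Gamma (1 - σ) ≠ 0 := by positivity
    rw [smul_eq_mul, habs, hg_def]
    simp only [h2, h3, h5, h6, h7]
    have hbne : ((w + a) ^ (σ + φ - 1)) ≠ 0 := by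
      have : (0:ℝ) < (w + a) ^ (σ + φ - 1) := Real.rpow_pos_of_pos hb _
      exact this.ne'
    field_simp
    linear_combination hbpow
  rw [setIntegral_congr_fun measurableSet_Ioi hcongr, integral_const_mul,
    Real.integral_rpow_mul_exp_neg_mul_Ioi (by linarith : (0:ℝ) < σ + φ) hs]
  have e1 : (1 / s) ^ (φ + σ) = s ^ (-(φ + σ)) := by
    rw [one_div, Real.inv_rpow hs.le, Real.rpow_neg hs.le]
  have e2 : s ^ (φ - 1) * s ^ (-(φ + σ)) = s ^ (-1 - σ) := by
    rw [← Real.rpow_add hs]; ring_nf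
  rw [add_comm σ φ, e1]
  field_simp
  have e2' : s ^ (φ - 1) * s ^ (-σ + -φ) = s ^ (-1 - σ) := by
    rw [← Real.rpow_add hs]; ring_nf
  linear_combination e2
end

section
/- Let φ ≥ 1 be an integer, n ≥ 1 an integer, and z ≥ 0. Then the (n-1)φ-th derivative with respect to λ of λ^{nφ-1}/(1+zλ)^{φ} equals (Γ(nφ)/Γ(φ)) · λ^{φ-1}/(1+zλ)^{nφ}, for λ > 0. -/
open Finset

private lemma ascFactorial_prod (n : ℕ) : ∀ k : ℕ, n.ascFactorial k = ∏ i ∈ range k, (n + i)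
  | 0 => by simp
  | k + 1 => by rw [Nat.ascFactorial_succ, prod_range_succ, ascFactorial_prod n k]; ring

private lemma binom (u : ℝ) (p : ℕ) :
    (u - 1) ^ p = ∑ j ∈ range (p + 1), (p.choose j : ℝ) * (-1) ^ (p - j) * u ^ j := by
  rw [sub_pow]
  refine sum_congr rfl fun j hj => ?_
  have hj' := mem_range.1 hj
  have h : (-1 : ℝ) ^ (j + p) = (-1) ^ (p - j) := by
    rw [show j + p = (p - j) + 2 * j by omega, pow_add, pow_mul]
    simp
  rw [h]
  ring

private lemma key (z : ℝ) (c : ℕ → ℝ) (e : ℕ → ℤ) (J : Finset ℕ) :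
    ∀ (k : ℕ) (x : ℝ), 0 < 1 + z * x →
    iteratedDeriv k (fun y : ℝ => ∑ j ∈ J, c j * (1 + z * y) ^ (e j)) x
      = ∑ j ∈ J, c j * (∏ i ∈ range k, ((e j : ℝ) - i)) * z ^ k * (1 + z * x) ^ (e j - k) := by
  intro k
  induction k with
  | zero => intro x hx; simp
  | succ k ih =>
    intro x hx
    rw [iteratedDeriv_succ]
    have hopen : IsOpen {y : ℝ | 0 < 1 + z * y} :=
      isOpen_lt continuous_const (by fun_prop)
    have hev : iteratedDeriv k (fun y : ℝ => ∑ j ∈ J, c j * (1 + z * y) ^ (e j))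
        =ᶠ[nhds x] fun y =>
          ∑ j ∈ J, c j * (∏ i ∈ range k, ((e j : ℝ) - i)) * z ^ k * (1 + z * y) ^ (e j - (k : ℤ)) := by
      filter_upwards [hopen.mem_nhds hx] with y hy using ih y hy
    rw [hev.deriv_eq]
    have hd : HasDerivAt (fun y : ℝ =>
        ∑ j ∈ J, c j * (∏ i ∈ range k, ((e j : ℝ) - i)) * z ^ k * (1 + z * y) ^ (e j - (k : ℤ)))
        (∑ j ∈ J, c j * (∏ i ∈ range k, ((e j : ℝ) - i)) * z ^ k *
          (((e j - (k : ℤ) : ℤ) : ℝ) * (1 + z * x) ^ (e j - (k : ℤ) - 1) * z)) x := by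
      apply HasDerivAt.fun_sum
      intro j _
      have hin : HasDerivAt (fun y : ℝ => 1 + z * y) z x := by
        simpa using ((hasDerivAt_id x).const_mul z).const_add 1
      exact ((hasDerivAt_zpow (e j - k) (1 + z * x) (Or.inl (ne_of_gt hx))).comp x hin).const_mul _
    rw [hd.deriv]
    refine Finset.sum_congr rfl fun j _ => ?_
    rw [prod_range_succ, show e j - ((k : ℕ) + 1 : ℕ) = e j - (k : ℤ) - 1 by push_cast; ring]
    push_cast
    ring

theorem stmt_12 (φ n : ℕ) (hφ : 1 ≤ φ) (hn : 1 ≤ n) (z : ℝ) (hz : 0 ≤ z)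
    (l : ℝ) (hl : 0 < l) :
    iteratedDeriv ((n - 1) * φ) (fun x : ℝ => x ^ (n * φ - 1) / (1 + z * x) ^ φ) l
      = Real.Gamma ((n * φ : ℕ) : ℝ) / Real.Gamma (φ : ℝ) * l ^ (φ - 1) / (1 + z * l) ^ (n * φ) := by
  set N := n * φ with hN
  set m := (n - 1) * φ with hm
  have hNφ : φ ≤ N := Nat.le_mul_of_pos_left φ hn
  have hN1 : 1 ≤ N := le_trans hφ hNφ
  have hmN : m + φ = N := by rw [hN, hm]; cases n with
    | zero => omega
    | succ k => simp [Nat.succ_mul, Nat.succ_sub_one]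
  have hGN : Real.Gamma ((N : ℕ) : ℝ) = (N - 1).factorial := by
    rw [show ((N : ℕ) : ℝ) = ((N - 1 : ℕ) : ℝ) + 1 by push_cast [hN1]; ring]
    exact Real.Gamma_nat_eq_factorial _
  have hGφ : Real.Gamma ((φ : ℕ) : ℝ) = (φ - 1).factorial := by
    rw [show ((φ : ℕ) : ℝ) = ((φ - 1 : ℕ) : ℝ) + 1 by push_cast [hφ]; ring]
    exact Real.Gamma_nat_eq_factorial _
  rcases hz.eq_or_lt with hz0 | hz0
  · -- z = 0 case
    have hfun : (fun x : ℝ => x ^ (N - 1) / (1 + z * x) ^ φ) = fun x : ℝ => x ^ (N - 1) := by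
      funext x; rw [← hz0]; simp
    rw [hfun, ← hz0, iteratedDeriv_eq_iterate, iter_deriv_pow,
      show N - 1 - m = φ - 1 by omega, hGN, hGφ,
      Finset.prod_range_natCast_sub, ← Nat.descFactorial_eq_prod_range]
    have hd : (φ - 1).factorial * (N - 1).descFactorial m = (N - 1).factorial := by
      have := Nat.factorial_mul_descFactorial (show m ≤ N - 1 by omega)
      rwa [show N - 1 - m = φ - 1 by omega] at this
    have hd' : ((φ - 1).factorial : ℝ) * ((N - 1).descFactorial m : ℝ)
        = ((N - 1).factorial : ℝ) := by exact_mod_cast congrArg Nat.cast hd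
    have hfne : ((φ - 1).factorial : ℝ) ≠ 0 := by positivity
    simp only [zero_mul, add_zero, one_pow, div_one]
    field_simp
    linear_combination hd'
  · -- z > 0 case
    have hzne : z ≠ 0 := ne_of_gt hz0
    have hl1 : (0:ℝ) < 1 + z * l := by positivity
    have hl1ne : (1 + z * l) ≠ 0 := ne_of_gt hl1
    have hopen : IsOpen {y : ℝ | 0 < 1 + z * y} :=
      isOpen_lt continuous_const (by fun_prop)
    set c : ℕ → ℝ := fun j => ((N - 1).choose j : ℝ) * (-1) ^ (N - 1 - j) / z ^ (N - 1) with hc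
    set e : ℕ → ℤ := fun j => (j : ℤ) - φ with he
    have hev : (fun x : ℝ => x ^ (N - 1) / (1 + z * x) ^ φ)
        =ᶠ[nhds l] fun y => ∑ j ∈ range N, c j * (1 + z * y) ^ (e j) := by
      filter_upwards [hopen.mem_nhds hl1] with y hy
      have hyne : (1 + z * y) ≠ 0 := ne_of_gt hy
      have h1 : (z * y) ^ (N - 1)
          = ∑ j ∈ range N, ((N - 1).choose j : ℝ) * (-1) ^ (N - 1 - j) * (1 + z * y) ^ j := by
        have hb := binom (1 + z * y) (N - 1)
        rw [show N - 1 + 1 = N by omega] at hb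
        simpa using hb
      have h2 : ∀ j ∈ range N, c j * (1 + z * y) ^ (e j)
          = ((N - 1).choose j : ℝ) * (-1) ^ (N - 1 - j) * (1 + z * y) ^ j
            / (z ^ (N - 1) * (1 + z * y) ^ φ) := by
        intro j _
        simp only [hc, he]
        rw [zpow_sub₀ hyne, zpow_natCast, zpow_natCast]
        field_simp
      rw [Finset.sum_congr rfl h2, ← Finset.sum_div, ← h1, mul_pow]
      field_simp
    rw [Filter.EventuallyEq.iteratedDeriv_eq m hev, key z c e (range N) m l hl1]
    have hsub : ∑ j ∈ range φ,
          c j * (∏ i ∈ range m, ((e j : ℝ) - i)) * z ^ m * (1 + z * l) ^ (e j - (m : ℤ))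
        = ∑ j ∈ range N,
          c j * (∏ i ∈ range m, ((e j : ℝ) - i)) * z ^ m * (1 + z * l) ^ (e j - (m : ℤ)) := by
      refine Finset.sum_subset (Finset.range_subset_range.2 hNφ) fun j hj hj' => ?_
      have hjN : j < N := mem_range.1 hj
      have hjφ : φ ≤ j := by by_contra h; exact hj' (mem_range.2 (by omega))
      have hmem : j - φ ∈ range m := mem_range.2 (by omega)
      have hzero : (∏ i ∈ range m, ((e j : ℝ) - i)) = 0 := by
        refine Finset.prod_eq_zero hmem ?_
        simp only [he]
        push_cast [hjφ]
        ring
      rw [hzero]; ring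
    rw [← hsub]
    have hterm : ∀ j ∈ range φ,
        c j * (∏ i ∈ range m, ((e j : ℝ) - i)) * z ^ m * (1 + z * l) ^ (e j - (m : ℤ))
          = ((N - 1).factorial : ℝ) / (((φ - 1).factorial : ℝ) * z ^ (φ - 1) * (1 + z * l) ^ N)
            * (((φ - 1).choose j : ℝ) * (-1) ^ (φ - 1 - j) * (1 + z * l) ^ j) := by
      intro j hj
      have hjφ : j < φ := mem_range.1 hj
      have hp : (∏ i ∈ range m, ((e j : ℝ) - i))
          = (-1) ^ m * (((φ - j).ascFactorial m : ℕ) : ℝ) := by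
        calc (∏ i ∈ range m, ((e j : ℝ) - i))
            = ∏ i ∈ range m, ((-1) * (((φ - j : ℕ) : ℝ) + i)) := by
              refine Finset.prod_congr rfl fun i _ => ?_
              simp only [he]
              push_cast [hjφ.le]
              ring
          _ = (-1) ^ m * ∏ i ∈ range m, (((φ - j : ℕ) : ℝ) + i) := by
              rw [Finset.prod_mul_distrib, Finset.prod_const]
              simp [Finset.card_range]
          _ = (-1) ^ m * (((φ - j).ascFactorial m : ℕ) : ℝ) := by
              rw [ascFactorial_prod]
              push_cast
              ring
      have hzp : (1 + z * l) ^ (e j - (m : ℤ)) = (1 + z * l) ^ j / (1 + z * l) ^ N := by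
        simp only [he]
        rw [show (j : ℤ) - (φ : ℤ) - (m : ℤ) = (j : ℤ) - (N : ℤ) by
          have : (m : ℤ) + (φ : ℤ) = (N : ℤ) := by exact_mod_cast congrArg Nat.cast hmN
          omega]
        rw [zpow_sub₀ hl1ne, zpow_natCast, zpow_natCast]
      have hsign : (-1 : ℝ) ^ (N - 1 - j) * (-1) ^ m = (-1) ^ (φ - 1 - j) := by
        rw [← pow_add, show N - 1 - j + m = (φ - 1 - j) + 2 * m by omega, pow_add, pow_mul]
        simp
      have f1 : ((N - 1).choose j : ℝ) * (j.factorial : ℝ) * ((N - 1 - j).factorial : ℝ)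
          = ((N - 1).factorial : ℝ) := by
        exact_mod_cast congrArg Nat.cast (Nat.choose_mul_factorial_mul_factorial
          (show j ≤ N - 1 by omega))
      have f2 : ((φ - 1).choose j : ℝ) * (j.factorial : ℝ) * ((φ - 1 - j).factorial : ℝ)
          = ((φ - 1).factorial : ℝ) := by
        exact_mod_cast congrArg Nat.cast (Nat.choose_mul_factorial_mul_factorial
          (show j ≤ φ - 1 by omega))
      have f3 : (((φ - 1 - j).factorial : ℕ) : ℝ) * (((φ - j).ascFactorial m : ℕ) : ℝ)
          = (((N - 1 - j).factorial : ℕ) : ℝ) := by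
        have h := Nat.factorial_mul_ascFactorial' (φ - j) m (by omega)
        rw [show φ - j - 1 = φ - 1 - j by omega, show φ - j + m - 1 = N - 1 - j by omega] at h
        exact_mod_cast congrArg Nat.cast h
      have hcomb : ((N - 1).choose j : ℝ) * (((φ - j).ascFactorial m : ℕ) : ℝ)
            * ((φ - 1).factorial : ℝ)
          = ((N - 1).factorial : ℝ) * ((φ - 1).choose j : ℝ) := by
        linear_combination (-(((N - 1).choose j : ℝ) * (((φ - j).ascFactorial m : ℕ) : ℝ))) * f2
          + (((N - 1).choose j : ℝ) * ((φ - 1).choose j : ℝ) * (j.factorial : ℝ)) * f3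
          + ((φ - 1).choose j : ℝ) * f1
      have hzpow : (z : ℝ) ^ (N - 1) = z ^ (φ - 1) * z ^ m := by
        rw [← pow_add]; congr 1; omega
      simp only [hc]
      rw [hp, hzp, hzpow, ← hsign]
      have hφne : ((φ - 1).factorial : ℝ) ≠ 0 := by positivity
      field_simp
      linear_combination hcomb
    rw [Finset.sum_congr rfl hterm, ← Finset.mul_sum]
    have hinner : ∑ j ∈ range φ, ((φ - 1).choose j : ℝ) * (-1) ^ (φ - 1 - j) * (1 + z * l) ^ j
        = (z * l) ^ (φ - 1) := by
      have hb := binom (1 + z * l) (φ - 1)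
      rw [show φ - 1 + 1 = φ by omega] at hb
      simpa using hb.symm
    rw [hinner, hGN, hGφ, mul_pow]
    field_simp
end
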